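/- Let v be the first vertex of the path P satisfying the cover condition. Then for every minimum weight vertex cover C* of P: v ∈ C* if and only if Partition(v) ∩ P_{⪯v} ⊆ C*; i.e., v lies in a minimum weight vertex cover of P exactly when all vertices on its side of the bipartition preceding it do as well. -/
import Mathlib


open Finset

/-- `C` is a vertex cover of the subpath of the path `P = (v_0, …, v_{n-1})`
induced by the vertices `v_lo, v_{lo+1}, …, v_{hi-1}` (half-open interval `[lo, hi)`);
the edges of this subpath are `{v_i, v_{i+1}}` for `lo ≤ i` and `i + 1 < hi`. -/
def IsCoverOn (lo hi : ℕ) (C : Finset ℕ) : Prop :=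
  (∀ j ∈ C, lo ≤ j ∧ j < hi) ∧ ∀ i : ℕ, lo ≤ i → i + 1 < hi → (i ∈ C ∨ i + 1 ∈ C)

/-- The total weight `ω(C) = ∑_{v ∈ C} ω(v)` of a set of vertices. -/
def wsum (ω : ℕ → ℝ) (C : Finset ℕ) : ℝ := ∑ j ∈ C, ω j

/-- `C` is a minimum weight vertex cover (MWVC) of the subpath on the vertices `[lo, hi)`. -/
def IsMWVCOn (ω : ℕ → ℝ) (lo hi : ℕ) (C : Finset ℕ) : Prop :=
  IsCoverOn lo hi C ∧ ∀ D : Finset ℕ, IsCoverOn lo hi D → wsum ω C ≤ wsum ω D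

/-- `Partition(v_l) ∩ P_{⪯ v_l}`: the vertices up to (and including) `v_l` lying on the
same side of the path's bipartition as `v_l`. -/
def sameSide (l : ℕ) : Finset ℕ := (range (l + 1)).filter fun j => j % 2 = l % 2

/-- `P_{⪯ v_l} ∖ Partition(v_l)`: the vertices up to `v_l` on the opposite side. -/
def otherSide (l : ℕ) : Finset ℕ := (range (l + 1)).filter fun j => j % 2 ≠ l % 2

/-- `v_l` satisfies the (weak) cover condition. -/
def CoverCond (ω : ℕ → ℝ) (l : ℕ) : Prop := wsum ω (sameSide l) ≤ wsum ω (otherSide l)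

/-- `v_l` satisfies the strict cover condition. -/
def StrictCoverCond (ω : ℕ → ℝ) (l : ℕ) : Prop := wsum ω (sameSide l) < wsum ω (otherSide l)

lemma mem_sameSide {i l : ℕ} : i ∈ sameSide l ↔ i ≤ l ∧ i % 2 = l % 2 := by
  simp [sameSide, Nat.lt_succ_iff]

lemma mem_otherSide {i l : ℕ} : i ∈ otherSide l ↔ i ≤ l ∧ i % 2 ≠ l % 2 := by
  simp [otherSide, Nat.lt_succ_iff]

lemma otherSide_succ (k : ℕ) : otherSide (k + 1) = sameSide k := by
  ext i
  rw [mem_otherSide, mem_sameSide]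
  omega

lemma sameSide_succ_succ (k : ℕ) : sameSide (k + 2) = insert (k + 2) (sameSide k) := by
  ext i
  rw [mem_sameSide, Finset.mem_insert, mem_sameSide]
  omega

lemma sameSide_zero : sameSide 0 = {0} := by
  ext i
  rw [mem_sameSide, Finset.mem_singleton]
  omega

lemma sameSide_one : sameSide 1 = {1} := by
  ext i
  rw [mem_sameSide, Finset.mem_singleton]
  omega

lemma otherSide_zero : otherSide 0 = ∅ := by
  ext i
  rw [mem_otherSide]
  simp
  omega

lemma otherSide_one : otherSide 1 = {0} := by
  ext i
  rw [mem_otherSide, Finset.mem_singleton]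
  omega

lemma wsum_empty (ω : ℕ → ℝ) : wsum ω ∅ = 0 := by simp [wsum]

lemma wsum_singleton (ω : ℕ → ℝ) (a : ℕ) : wsum ω {a} = ω a := by simp [wsum]

lemma wsum_insert (ω : ℕ → ℝ) {a : ℕ} {s : Finset ℕ} (h : a ∉ s) :
    wsum ω (insert a s) = ω a + wsum ω s := Finset.sum_insert h

/-- Key lemma: if no vertex up to `k` satisfies the cover condition, then `sameSide k`
is the unique maximum-weight independent set among subsets of `{0, …, k}`. -/
lemma max_indep (ω : ℕ → ℝ) :
    ∀ k : ℕ, (∀ j, j ≤ k → ¬ CoverCond ω j) →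
    ∀ I : Finset ℕ, (∀ i ∈ I, i ≤ k) → (∀ i, i ∈ I → i + 1 ∈ I → False) →
    wsum ω I < wsum ω (sameSide k) ∨ I = sameSide k := by
  intro k
  induction k using Nat.strong_induction_on with
  | _ k ih =>
    match k with
    | 0 =>
      intro hcc I hb hind
      have h0 : ¬ CoverCond ω 0 := hcc 0 le_rfl
      rw [CoverCond, sameSide_zero, otherSide_zero, wsum_empty, wsum_singleton, not_le] at h0
      rcases Finset.subset_singleton_iff.1
        (fun i hi => Finset.mem_singleton.2 (Nat.le_zero.1 (hb i hi))) with h | h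
      · left
        rw [h, wsum_empty, sameSide_zero, wsum_singleton]
        exact h0
      · right
        rw [h, sameSide_zero]
    | 1 =>
      intro hcc I hb hind
      have h0 : ¬ CoverCond ω 0 := hcc 0 (by omega)
      have h1 : ¬ CoverCond ω 1 := hcc 1 le_rfl
      rw [CoverCond, sameSide_zero, otherSide_zero, wsum_empty, wsum_singleton, not_le] at h0
      rw [CoverCond, sameSide_one, otherSide_one, wsum_singleton, wsum_singleton, not_le] at h1
      by_cases hI1 : 1 ∈ I
      · right
        rw [sameSide_one]
        apply Finset.Subset.antisymm
        · intro i hi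
          have hle := hb i hi
          have : i ≠ 0 := by
            rintro rfl
            exact hind 0 hi hI1
          rw [Finset.mem_singleton]
          omega
        · intro i hi
          rw [Finset.mem_singleton] at hi
          rw [hi]; exact hI1
      · left
        rw [sameSide_one, wsum_singleton]
        have hsub : I ⊆ {0} := by
          intro i hi
          have hle := hb i hi
          have : i ≠ 1 := fun h => hI1 (h ▸ hi)
          rw [Finset.mem_singleton]
          omega
        rcases Finset.subset_singleton_iff.1 hsub with h | h
        · rw [h, wsum_empty]; linarith
        · rw [h, wsum_singleton]; exact h1
    | (k + 2) =>
      intro hcc I hb hind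
      have ih1 := ih (k + 1) (by omega) (fun j hj => hcc j (by omega))
      have ih0 := ih k (by omega) (fun j hj => hcc j (by omega))
      have hns : (k + 2 : ℕ) ∉ sameSide k := fun h => by
        have := (mem_sameSide.1 h).1; omega
      have hws : wsum ω (sameSide (k + 2)) = ω (k + 2) + wsum ω (sameSide k) := by
        rw [sameSide_succ_succ, wsum_insert ω hns]
      by_cases hmem : k + 2 ∈ I
      · -- k+2 ∈ I : peel it off and use the IH at k
        have hk1 : k + 1 ∉ I := fun h => hind (k + 1) h hmem
        set I' := I.erase (k + 2) with hI'
        have hb' : ∀ i ∈ I', i ≤ k := by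
          intro i hi
          have h1 := Finset.mem_of_mem_erase hi
          have h2 := Finset.ne_of_mem_erase hi
          have h3 := hb i h1
          have : i ≠ k + 1 := fun h => hk1 (h ▸ h1)
          omega
        have hind' : ∀ i, i ∈ I' → i + 1 ∈ I' → False := fun i h1 h2 =>
          hind i (Finset.mem_of_mem_erase h1) (Finset.mem_of_mem_erase h2)
        have hII : I = insert (k + 2) I' := (Finset.insert_erase hmem).symm
        have hnI' : (k + 2 : ℕ) ∉ I' := Finset.notMem_erase _ _
        have hwI : wsum ω I = ω (k + 2) + wsum ω I' := by
          rw [hII, wsum_insert ω hnI']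
        rcases ih0 I' hb' hind' with h | h
        · left; rw [hwI, hws]; linarith
        · right; rw [hII, h, sameSide_succ_succ]
      · -- k+2 ∉ I : I lives in [0, k+1]
        have hb' : ∀ i ∈ I, i ≤ k + 1 := by
          intro i hi
          have := hb i hi
          have : i ≠ k + 2 := fun h => hmem (h ▸ hi)
          omega
        have hcc2 : ¬ CoverCond ω (k + 2) := hcc (k + 2) le_rfl
        rw [CoverCond, not_le] at hcc2
        have hoth : wsum ω (otherSide (k + 2)) = wsum ω (sameSide (k + 1)) := by
          rw [otherSide_succ]
        left
        rcases ih1 I hb' hind with h | h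
        · calc wsum ω I < wsum ω (sameSide (k + 1)) := h
            _ = wsum ω (otherSide (k + 2)) := hoth.symm
            _ < wsum ω (sameSide (k + 2)) := hcc2
        · calc wsum ω I = wsum ω (sameSide (k + 1)) := by rw [h]
            _ = wsum ω (otherSide (k + 2)) := hoth.symm
            _ < wsum ω (sameSide (k + 2)) := hcc2

/-- Let `v_l` be the first vertex of the path satisfying the cover
condition. Then for every MWVC `C` of the whole path: `v_l ∈ C` if and only if all of
`Partition(v_l) ∩ P_{⪯ v_l}` is contained in `C`. -/
theorem stmt_7 (n l : ℕ) (ω : ℕ → ℝ) (hl : l < n)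
    (hcc : CoverCond ω l) (hfirst : ∀ j, j < l → ¬ CoverCond ω j) :
    ∀ C : Finset ℕ, IsMWVCOn ω 0 n C → (l ∈ C ↔ sameSide l ⊆ C) := by
  intro C hC
  obtain ⟨⟨hCb, hCe⟩, hCmin⟩ := hC
  constructor
  · intro hlC
    intro v hv
    by_contra hvC
    rw [mem_sameSide] at hv
    have hvl : v < l := by
      by_contra h
      have hveq : v = l := by omega
      subst hveq
      exact hvC hlC
    obtain ⟨m, rfl⟩ : ∃ m, l = m + 1 := ⟨l - 1, by omega⟩
    -- the exchange set: keep C outside the prefix, use sameSide (m+1) on the prefix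
    have hsub : sameSide (m + 1) ⊆ range (m + 2) := by
      intro j hj
      rw [Finset.mem_range]
      have := (mem_sameSide.1 hj).1
      omega
    have hdisj : Disjoint (C \ range (m + 2)) (sameSide (m + 1)) := by
      rw [Finset.disjoint_right]
      intro j hj hj'
      exact (Finset.mem_sdiff.1 hj').2 (hsub hj)
    have hDcover : IsCoverOn 0 n ((C \ range (m + 2)) ∪ sameSide (m + 1)) := by
      constructor
      · intro j hj
        rcases Finset.mem_union.1 hj with h | h
        · exact ⟨Nat.zero_le _, (hCb j (Finset.mem_sdiff.1 h).1).2⟩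
        · exact ⟨Nat.zero_le _, lt_of_le_of_lt (mem_sameSide.1 h).1 hl⟩
      · intro i _ hin
        rcases Nat.lt_trichotomy i (m + 1) with hi | hi | hi
        · by_cases hp : i % 2 = (m + 1) % 2
          · exact Or.inl (Finset.mem_union_right _ (mem_sameSide.2 ⟨by omega, hp⟩))
          · exact Or.inr (Finset.mem_union_right _ (mem_sameSide.2 ⟨by omega, by omega⟩))
        · exact Or.inl (Finset.mem_union_right _ (mem_sameSide.2 ⟨by omega, by omega⟩))
        · rcases hCe i (Nat.zero_le _) hin with h | h
          · exact Or.inl (Finset.mem_union_left _ (Finset.mem_sdiff.2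
              ⟨h, by rw [Finset.mem_range]; omega⟩))
          · exact Or.inr (Finset.mem_union_left _ (Finset.mem_sdiff.2
              ⟨h, by rw [Finset.mem_range]; omega⟩))
    have hle := hCmin _ hDcover
    have hwD : wsum ω ((C \ range (m + 2)) ∪ sameSide (m + 1)) =
        wsum ω (C \ range (m + 2)) + wsum ω (sameSide (m + 1)) :=
      Finset.sum_union hdisj
    have hwC : wsum ω (C ∩ range (m + 2)) + wsum ω (C \ range (m + 2)) = wsum ω C :=
      Finset.sum_inter_add_sum_sdiff C (range (m + 2)) ω
    have hkey : wsum ω (C ∩ range (m + 2)) ≤ wsum ω (sameSide (m + 1)) := by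
      rw [hwD] at hle
      linarith
    -- the complement J of C inside the prefix
    have hwJ : wsum ω (range (m + 2) ∩ C) + wsum ω (range (m + 2) \ C) =
        wsum ω (range (m + 2)) :=
      Finset.sum_inter_add_sum_sdiff (range (m + 2)) C ω
    have hwP : wsum ω (sameSide (m + 1)) + wsum ω (otherSide (m + 1)) =
        wsum ω (range (m + 2)) := by
      simpa [wsum, sameSide, otherSide] using
        Finset.sum_filter_add_sum_filter_not (range (m + 2))
          (fun j => j % 2 = (m + 1) % 2) ω
    have hIC : wsum ω (range (m + 2) ∩ C) = wsum ω (C ∩ range (m + 2)) := by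
      rw [Finset.inter_comm]
    have hJge : wsum ω (otherSide (m + 1)) ≤ wsum ω (range (m + 2) \ C) := by
      linarith
    -- apply the max-independent-set lemma to J
    set J := range (m + 2) \ C with hJ
    have hbJ : ∀ i ∈ J, i ≤ m := by
      intro i hi
      obtain ⟨h1, h2⟩ := Finset.mem_sdiff.1 hi
      rw [Finset.mem_range] at h1
      have : i ≠ m + 1 := fun h => h2 (h ▸ hlC)
      omega
    have hindJ : ∀ i, i ∈ J → i + 1 ∈ J → False := by
      intro i h1 h2
      obtain ⟨h1a, h1b⟩ := Finset.mem_sdiff.1 h1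
      obtain ⟨h2a, h2b⟩ := Finset.mem_sdiff.1 h2
      rw [Finset.mem_range] at h2a
      rcases hCe i (Nat.zero_le _) (by omega) with h | h
      · exact h1b h
      · exact h2b h
    have hccJ : ∀ j, j ≤ m → ¬ CoverCond ω j := fun j hj => hfirst j (by omega)
    rcases max_indep ω m hccJ J hbJ hindJ with h | h
    · rw [← otherSide_succ] at h
      linarith
    · -- J = sameSide m, but v ∈ J and v has the wrong parity
      have hvJ : v ∈ J := Finset.mem_sdiff.2 ⟨Finset.mem_range.2 (by omega), hvC⟩
      rw [h, mem_sameSide] at hvJ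
      omega
  · intro h
    exact h (mem_sameSide.2 ⟨le_rfl, rfl⟩)
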